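/- arXiv:2106.05694 — 4 statements merged into one kernel-verified Lean document; each statement's English description precedes it below -/
import Mathlib

section
/- A 2x2 positive definite matrix Σ satisfies Σ = σ²(I−B)⁻¹(I−B)⁻ᵀ for some σ² > 0 and B strictly lower triangular (i.e., B = [[0,0],[β,0]]) if and only if Σ₁₁² = Σ₁₁Σ₂₂ − Σ₁₂², in which case β = Σ₁₂/Σ₁₁ and σ² = Σ₁₁. -/
open Matrix

theorem stmt_0 (M : Matrix (Fin 2) (Fin 2) ℝ) (hM : M.PosDef) :
    ((∃ s : ℝ, 0 < s ∧ ∃ β : ℝ,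
        M = s • ((1 - !![(0:ℝ), 0; β, 0])⁻¹ * ((1 - !![(0:ℝ), 0; β, 0])⁻¹)ᵀ)) ↔
      (M 0 0) ^ 2 = M 0 0 * M 1 1 - (M 0 1) ^ 2) ∧
    (∀ s β : ℝ, 0 < s →
      M = s • ((1 - !![(0:ℝ), 0; β, 0])⁻¹ * ((1 - !![(0:ℝ), 0; β, 0])⁻¹)ᵀ) →
      β = M 0 1 / M 0 0 ∧ s = M 0 0) := by
  have hinv : ∀ β : ℝ, (1 - !![(0:ℝ), 0; β, 0])⁻¹ = !![1, 0; β, 1] := fun β => by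
    apply inv_eq_right_inv
    ext i j
    fin_cases i <;> fin_cases j <;>
      simp [Matrix.mul_apply, Fin.sum_univ_two, Matrix.one_apply]
  have hexp : ∀ (s β : ℝ),
      s • ((1 - !![(0:ℝ), 0; β, 0])⁻¹ * ((1 - !![(0:ℝ), 0; β, 0])⁻¹)ᵀ) =
        !![s, s*β; s*β, s*(β*β+1)] := by
    intro s β
    have htr : (!![(1:ℝ), 0; β, 1])ᵀ = !![1, β; 0, 1] := by
      ext i j; fin_cases i <;> fin_cases j <;> rfl
    rw [hinv, htr]
    ext i j
    fin_cases i <;> fin_cases j <;>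
      simp [Matrix.mul_apply, Fin.sum_univ_two]
  have h00 : 0 < M 0 0 := by
    have := hM.dotProduct_mulVec_pos (x := Pi.single 0 1) (by intro h; simpa using congrFun h 0)
    simpa [dotProduct, mulVec, Fin.sum_univ_two, Pi.single_apply] using this
  have hsym : M 1 0 = M 0 1 := by
    have := hM.isHermitian.apply 0 1
    simpa using this
  constructor
  · constructor
    · rintro ⟨s, hs, β, hMe⟩
      rw [hexp] at hMe
      have e00 := congrFun (congrFun hMe 0) 0
      have e01 := congrFun (congrFun hMe 0) 1
      have e11 := congrFun (congrFun hMe 1) 1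
      simp at e00 e01 e11
      rw [e00, e01, e11]; ring
    · intro h
      refine ⟨M 0 0, h00, M 0 1 / M 0 0, ?_⟩
      rw [hexp]
      ext i j
      fin_cases i <;> fin_cases j
      · simp
      · simp; field_simp
      · simp; rw [hsym]; field_simp
      · simp
        field_simp
        nlinarith [h]
  · intro s β hs hMe
    rw [hexp] at hMe
    have e00 := congrFun (congrFun hMe 0) 0
    have e01 := congrFun (congrFun hMe 0) 1
    simp at e00 e01
    constructor
    · rw [e00, e01]; field_simp
    · exact e00.symm
end

section
/- Let Σ be a 2x2 positive definite matrix lying in the union M_r = M_{r1} ∪ M_{r2}, where M_{ra} = {Σ positive definite : Σ_{aa}² = det(Σ)}. Then Σ ∈ M_{r1} if and only if Σ₁₁ ≤ Σ₂₂. -/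
open Matrix

theorem stmt_3 (M : Matrix (Fin 2) (Fin 2) ℝ) (hM : M.PosDef)
    (hMr : (M 0 0) ^ 2 = M.det ∨ (M 1 1) ^ 2 = M.det) :
    (M 0 0) ^ 2 = M.det ↔ M 0 0 ≤ M 1 1 := by
  have h00 : 0 < M 0 0 := by
    exact hM.diag_pos
  have h11 : 0 < M 1 1 := by
    exact hM.diag_pos
  have hsym : M 1 0 = M 0 1 := by
    have := hM.1; have := congrFun (congrFun this.symm 0) 1
    simpa [Matrix.conjTranspose_apply] using this.symm
  have hdet : M.det = M 0 0 * M 1 1 - M 0 1 * M 1 0 := by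
    rw [Matrix.det_fin_two]
  have hle : M.det ≤ M 0 0 * M 1 1 := by
    rw [hdet, hsym]; nlinarith [sq_nonneg (M 0 1)]
  constructor
  · intro h
    nlinarith
  · intro h
    rcases hMr with h1 | h2
    · exact h1
    · have : M 1 1 ≤ M 0 0 := by nlinarith
      have heq : M 0 0 = M 1 1 := le_antisymm h this
      rw [heq]; exact h2
end

section
/- The function T : M_r → ℝ defined by T(Σ) = (Σ₁₂/Σ₁₁)·𝟙{Σ₁₁ ≤ Σ₂₂} is well-defined and continuous at every Σ ∈ M_r with Σ₁₁ ≠ Σ₂₂, but discontinuous at no point of M_r; indeed T is continuous on all of M_r (because Σ ∈ M_r with Σ₁₁ = Σ₂₂ forces Σ₁₂ = 0). -/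
open Matrix

lemma posdef_diag_pos {A : Matrix (Fin 2) (Fin 2) ℝ} (h : A.PosDef) (i : Fin 2) :
    0 < A i i := by
  have := h.dotProduct_mulVec_pos (x := Pi.single i 1) (by simp [Function.ne_iff])
  simpa using this

lemma key {A : Matrix (Fin 2) (Fin 2) ℝ}
    (h : A.PosDef ∧ ((A 0 0) ^ 2 = A.det ∨ (A 1 1) ^ 2 = A.det))
    (he : A 0 0 = A 1 1) : A 0 1 = 0 := by
  have hsym : A 1 0 = A 0 1 := by
    have := h.1.1
    have := congrFun (congrFun this 0) 1
    simpa [conjTranspose_apply] using this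
  have hdet : A.det = A 0 0 * A 1 1 - A 0 1 * A 1 0 := Matrix.det_fin_two A
  rw [hsym, ← he] at hdet
  have : A 0 1 ^ 2 = 0 := by
    rcases h.2 with h2 | h2
    · nlinarith [h2, hdet]
    · rw [← he] at h2; nlinarith [h2, hdet]
  exact pow_eq_zero_iff (n := 2) (by norm_num) |>.mp this

/-- The causal-effect map `T(Σ) = (Σ₁₂/Σ₁₁)·𝟙{Σ₁₁ ≤ Σ₂₂}` is continuous on all of
`M_r`, since on `M_r` equality `Σ₁₁ = Σ₂₂` forces `Σ₁₂ = 0`. -/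
theorem stmt_16 :
    (∀ M : {A : Matrix (Fin 2) (Fin 2) ℝ //
        A.PosDef ∧ ((A 0 0) ^ 2 = A.det ∨ (A 1 1) ^ 2 = A.det)},
      M.1 0 0 = M.1 1 1 → M.1 0 1 = 0) ∧
    Continuous (fun M : {A : Matrix (Fin 2) (Fin 2) ℝ //
        A.PosDef ∧ ((A 0 0) ^ 2 = A.det ∨ (A 1 1) ^ 2 = A.det)} =>
      if M.1 0 0 ≤ M.1 1 1 then M.1 0 1 / M.1 0 0 else 0) := by
  constructor
  · exact fun M => key M.2
  · have hentry : ∀ i j : Fin 2,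
        Continuous (fun M : {A : Matrix (Fin 2) (Fin 2) ℝ //
          A.PosDef ∧ ((A 0 0) ^ 2 = A.det ∨ (A 1 1) ^ 2 = A.det)} => M.1 i j) :=
      fun i j => continuous_subtype_val.matrix_elem i j
    apply Continuous.if_le
    · exact (hentry 0 1).div (hentry 0 0)
        (fun M => (posdef_diag_pos M.2.1 0).ne')
    · exact continuous_const
    · exact hentry 0 0
    · exact hentry 1 1
    · intro M hM
      rw [key M.2 hM, zero_div]
end

section
/- Let S be 2x2 positive definite and k ≥ 1. Define ℓ†(ψ) := −k·log(π·((1+ψ²)S₁₁ − 2ψS₁₂ + S₂₂)) − k for ψ ≠ 0, and ℓ†(0) := −k·log(π·(S₁₁ − S₁₂²/S₂₂ + S₂₂)) − k. Then ℓ†(0) ≥ lim_{ψ→0} ℓ†(ψ) = −k·log(π·(S₁₁ + S₂₂)) − k, with strict inequality whenever S₁₂ ≠ 0. -/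
open Matrix Real Filter

/-- The profile log-likelihood at `ψ = 0` dominates the limit of the nonzero-effect
profile log-likelihood as `ψ → 0`, strictly so when `S₁₂ ≠ 0`. -/
theorem stmt_19 (S : Matrix (Fin 2) (Fin 2) ℝ) (hS : S.PosDef) (k : ℕ) (hk : 1 ≤ k) :
    Filter.Tendsto
      (fun ψ : ℝ => -(k : ℝ) * Real.log (Real.pi *
        ((1 + ψ ^ 2) * S 0 0 - 2 * ψ * S 0 1 + S 1 1)) - k)
      (nhds 0) (nhds (-(k : ℝ) * Real.log (Real.pi * (S 0 0 + S 1 1)) - k)) ∧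
    (-(k : ℝ) * Real.log (Real.pi * (S 0 0 - (S 0 1) ^ 2 / S 1 1 + S 1 1)) - k
      ≥ -(k : ℝ) * Real.log (Real.pi * (S 0 0 + S 1 1)) - k) ∧
    (S 0 1 ≠ 0 →
      -(k : ℝ) * Real.log (Real.pi * (S 0 0 - (S 0 1) ^ 2 / S 1 1 + S 1 1)) - k
        > -(k : ℝ) * Real.log (Real.pi * (S 0 0 + S 1 1)) - k) := by
  have h00 : 0 < S 0 0 := by
    have := hS.dotProduct_mulVec_pos (x := fun i => if i = 0 then 1 else 0) (by
      intro h
      have := congrFun h 0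
      simp at this)
    simpa [dotProduct, Matrix.mulVec, Fin.sum_univ_two] using this
  have h11 : 0 < S 1 1 := by
    have := hS.dotProduct_mulVec_pos (x := fun i => if i = 1 then 1 else 0) (by
      intro h
      have := congrFun h 1
      simp at this)
    simpa [dotProduct, Matrix.mulVec, Fin.sum_univ_two] using this
  have hsym : S 1 0 = S 0 1 := by
    have := hS.1
    have h := congrFun (congrFun this.eq 0) 1
    simpa [Matrix.conjTranspose_apply] using h
  have hdet : 0 < S 0 0 * S 1 1 - S 0 1 ^ 2 := by
    have := hS.det_pos
    rw [Matrix.det_fin_two, hsym] at this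
    nlinarith [this]
  have hschur : 0 < S 0 0 - S 0 1 ^ 2 / S 1 1 := by
    rw [sub_pos, div_lt_iff₀ h11]
    nlinarith
  have hk' : (0 : ℝ) < k := by exact_mod_cast hk
  have hA : 0 < Real.pi * (S 0 0 - S 0 1 ^ 2 / S 1 1 + S 1 1) := by positivity
  have hB : 0 < Real.pi * (S 0 0 + S 1 1) := by positivity
  refine ⟨?_, ?_, ?_⟩
  · have hc : ContinuousAt (fun ψ : ℝ => -(k : ℝ) * Real.log (Real.pi *
        ((1 + ψ ^ 2) * S 0 0 - 2 * ψ * S 0 1 + S 1 1)) - k) 0 := by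
      apply ContinuousAt.sub _ continuousAt_const
      apply ContinuousAt.mul continuousAt_const
      apply ContinuousAt.log
      · fun_prop
      · simpa using hB.ne'
    have := hc.tendsto
    simpa using this
  · have hle : Real.pi * (S 0 0 - S 0 1 ^ 2 / S 1 1 + S 1 1) ≤ Real.pi * (S 0 0 + S 1 1) := by
      have : 0 ≤ S 0 1 ^ 2 / S 1 1 := by positivity
      nlinarith [Real.pi_pos]
    have := Real.log_le_log hA hle
    nlinarith
  · intro h01
    have hlt : Real.pi * (S 0 0 - S 0 1 ^ 2 / S 1 1 + S 1 1) < Real.pi * (S 0 0 + S 1 1) := by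
      have : 0 < S 0 1 ^ 2 / S 1 1 := by positivity
      nlinarith [Real.pi_pos]
    have := Real.log_lt_log hA hlt
    nlinarith
end
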